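/- The variety of quadruples (M1,M2,M3,M4) of 2×2 complex matrices satisfying det Mi = 0 for i = 1,2,3,4 and M1M2 = M2M3 = M3M4 = M4M1 = 0 has dimension 8 (as an affine algebraic set in ℂ¹⁶). -/

import Mathlib

open MvPolynomial

/-- The generic quadruple of 2×2 matrices, with entries the polynomial variables of the
coordinate ring `ℂ[ℂ¹⁶]`. -/
noncomputable def genMat (i : Fin 4) :
    Matrix (Fin 2) (Fin 2) (MvPolynomial (Fin 4 × Fin 2 × Fin 2) ℂ) :=
  Matrix.of fun a b => X (i, a, b)

/-- The ideal of the Kashiwara–Saito singularity: generated by `det Mᵢ` for `i ∈ ℤ/4` and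
the entries of the products `Mᵢ M_{i+1}` for `i ∈ ℤ/4` (cyclic indices). -/
noncomputable def KSideal : Ideal (MvPolynomial (Fin 4 × Fin 2 × Fin 2) ℂ) :=
  Ideal.span
    (Set.range (fun i : Fin 4 => (genMat i).det) ∪
      Set.range (fun p : Fin 4 × Fin 2 × Fin 2 => (genMat p.1 * genMat (p.1 + 1)) p.2.1 p.2.2))

namespace KSaux

abbrev σt : Type := Fin 4 × Fin 2 × Fin 2
abbrev Rr : Type := MvPolynomial σt ℂ
abbrev P8 : Type := MvPolynomial (Fin 8) ℂ

inductive Mode | L | F | Z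
deriving DecidableEq

structure Chart where
  m : Fin 4 → Mode
  e : Fin 4 → Bool
deriving DecidableEq

instance : Fintype Mode := ⟨{Mode.L, Mode.F, Mode.Z}, by rintro (_|_|_) <;> decide⟩

def Chart.valid (δ : Chart) : Prop := ∀ i, δ.m i = Mode.F → δ.m (i+1) = Mode.Z

noncomputable def Av (i : Fin 4) : P8 := MvPolynomial.X ⟨i.val, by omega⟩
noncomputable def Sv (i : Fin 4) : P8 := MvPolynomial.X ⟨4 + i.val, by omega⟩

noncomputable def uP (δ : Chart) (i : Fin 4) : Fin 2 → P8 :=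
  fun j => if δ.e i then (if j = 0 then 1 else Av i) else (if j = 0 then Av i else 1)

noncomputable def vP (δ : Chart) (i : Fin 4) : Fin 2 → P8 := fun j =>
  if δ.m i = Mode.Z then 0
  else if δ.m i = Mode.L then
    (if j = 0 then Sv i * (-(uP δ (i+1) 1)) else Sv i * uP δ (i+1) 0)
  else (if j = 0 then Sv i else Sv (i+1))

lemma fin2_one_ne_zero : (1 : Fin 2) ≠ 0 := by decide

lemma vP_Z {δ : Chart} {i : Fin 4} (hm : δ.m i = Mode.Z) (j : Fin 2) : vP δ i j = 0 := by
  simp [vP, hm]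

lemma vP_L0 {δ : Chart} {i : Fin 4} (hm : δ.m i = Mode.L) :
    vP δ i 0 = Sv i * (-(uP δ (i+1) 1)) := by simp [vP, hm]

lemma vP_L1 {δ : Chart} {i : Fin 4} (hm : δ.m i = Mode.L) :
    vP δ i 1 = Sv i * uP δ (i+1) 0 := by simp [vP, hm, fin2_one_ne_zero]

lemma vP_F0 {δ : Chart} {i : Fin 4} (hm : δ.m i = Mode.F) : vP δ i 0 = Sv i := by
  simp [vP, hm]

lemma vP_F1 {δ : Chart} {i : Fin 4} (hm : δ.m i = Mode.F) : vP δ i 1 = Sv (i+1) := by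
  simp [vP, hm, fin2_one_ne_zero]

noncomputable def φ (δ : Chart) : Rr →ₐ[ℂ] P8 :=
  MvPolynomial.aeval (fun p : σt => uP δ p.1 p.2.1 * vP δ p.1 p.2.2)

lemma φ_X (δ : Chart) (i : Fin 4) (a b : Fin 2) :
    φ δ (X (i, a, b)) = uP δ i a * vP δ i b := by
  simp [φ]

lemma dot_eq_zero (δ : Chart) (i : Fin 4) (h : δ.m i ≠ Mode.F) :
    vP δ i 0 * uP δ (i+1) 0 + vP δ i 1 * uP δ (i+1) 1 = 0 := by
  rcases hm : δ.m i with _ | _ | _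
  · rw [vP_L0 hm, vP_L1 hm]; ring
  · exact absurd hm h
  · rw [vP_Z hm, vP_Z hm]; ring

lemma KS_le_ker (δ : Chart) (hδ : δ.valid) : KSideal ≤ RingHom.ker (φ δ) := by
  rw [KSideal, Ideal.span_le]
  rintro g (⟨i, rfl⟩ | ⟨⟨i, a, b⟩, rfl⟩) <;> simp only [SetLike.mem_coe, RingHom.mem_ker]
  · rw [Matrix.det_fin_two]
    simp only [genMat, Matrix.of_apply, map_sub, map_mul, φ_X]
    ring
  · rw [Matrix.mul_apply, Fin.sum_univ_two]
    simp only [genMat, Matrix.of_apply, map_add, map_mul, φ_X]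
    rcases hm : δ.m i with _ | _ | _
    · have := dot_eq_zero δ i (by rw [hm]; simp)
      linear_combination (uP δ i a * vP δ (i+1) b) * this
    · have hz : δ.m (i+1) = Mode.Z := hδ i hm
      have : vP δ (i+1) b = 0 := by simp [vP, hz]
      rw [this]; ring
    · have := dot_eq_zero δ i (by rw [hm]; simp)
      linear_combination (uP δ i a * vP δ (i+1) b) * this

end KSaux


namespace KSaux

open MvPolynomial

def uval (e : Bool) (α : ℂ) : Fin 2 → ℂ :=
  fun a => if e then (if a = 0 then 1 else α) else (if a = 0 then α else 1)

lemma factor (M : Fin 2 → Fin 2 → ℂ) (hdet : M 0 0 * M 1 1 - M 0 1 * M 1 0 = 0) :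
    ∃ (e : Bool) (α : ℂ) (w : Fin 2 → ℂ), ∀ a b, M a b = uval e α a * w b := by
  by_cases h0 : M 0 0 = 0 ∧ M 0 1 = 0
  · refine ⟨false, 0, fun b => M 1 b, ?_⟩
    intro a b
    fin_cases a <;> fin_cases b <;> simp [uval, h0.1, h0.2]
  · by_cases h00 : M 0 0 = 0
    · have h01 : M 0 1 ≠ 0 := fun h => h0 ⟨h00, h⟩
      have h10 : M 1 0 = 0 := by
        have h2 : M 0 1 * M 1 0 = 0 := by linear_combination M 1 1 * h00 - hdet
        rcases mul_eq_zero.mp h2 with h | h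
        · exact absurd h h01
        · exact h
      refine ⟨true, M 1 1 / M 0 1, fun b => M 0 b, ?_⟩
      intro a b
      fin_cases a <;> fin_cases b <;> simp [uval, h00, h10]
      rw [div_mul_eq_mul_div, eq_div_iff h01]
    · refine ⟨true, M 1 0 / M 0 0, fun b => M 0 b, ?_⟩
      intro a b
      fin_cases a <;> fin_cases b <;> simp [uval]
      · rw [div_mul_eq_mul_div, eq_div_iff h00]
      · rw [div_mul_eq_mul_div, eq_div_iff h00]
        linear_combination hdet

lemma perp (u : Fin 2 → ℂ) (hu : u 0 = 1 ∨ u 1 = 1) (w : Fin 2 → ℂ)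
    (h : w 0 * u 0 + w 1 * u 1 = 0) :
    ∃ lam : ℂ, w 0 = lam * (-(u 1)) ∧ w 1 = lam * (u 0) := by
  rcases hu with h1 | h1
  · refine ⟨w 1, ?_, ?_⟩
    · linear_combination h - w 0 * h1
    · linear_combination (-(w 1)) * h1
  · refine ⟨-(w 0), ?_, ?_⟩
    · linear_combination (-(w 0)) * h1
    · linear_combination h - w 1 * h1

lemma uval_sel (e : Bool) (α : ℂ) : uval e α (if e then 0 else 1) = 1 := by
  rcases e <;> simp [uval, fin2_one_ne_zero]

theorem cover (x : σt → ℂ) (hx : x ∈ MvPolynomial.zeroLocus ℂ KSideal) :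
    ∃ δ : Chart, δ.valid ∧ ∀ g ∈ RingHom.ker (φ δ), MvPolynomial.eval x g = 0 := by
  classical
  have hdet : ∀ i : Fin 4, x (i,0,0) * x (i,1,1) - x (i,0,1) * x (i,1,0) = 0 := by
    intro i
    have hmem : (genMat i).det ∈ KSideal := Ideal.subset_span (Or.inl ⟨i, rfl⟩)
    have := hx _ hmem
    rw [Matrix.det_fin_two] at this
    simpa [genMat] using this
  have hprod : ∀ (i : Fin 4) (a b : Fin 2),
      x (i,a,0) * x (i+1,0,b) + x (i,a,1) * x (i+1,1,b) = 0 := by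
    intro i a b
    have hmem : (genMat i * genMat (i+1)) a b ∈ KSideal :=
      Ideal.subset_span (Or.inr ⟨(i,a,b), rfl⟩)
    have := hx _ hmem
    rw [Matrix.mul_apply, Fin.sum_univ_two] at this
    simpa [genMat] using this
  have hfac : ∀ i : Fin 4, ∃ (e : Bool) (α : ℂ) (w : Fin 2 → ℂ),
      ∀ a b, x (i,a,b) = uval e α a * w b := fun i =>
    factor (fun a b => x (i,a,b)) (hdet i)
  choose e α w hw using hfac
  set dot : Fin 4 → ℂ := fun i =>
    w i 0 * uval (e (i+1)) (α (i+1)) 0 + w i 1 * uval (e (i+1)) (α (i+1)) 1 with hdot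
  have hdotA : ∀ i, dot i
      = w i 0 * uval (e (i+1)) (α (i+1)) 0 + w i 1 * uval (e (i+1)) (α (i+1)) 1 :=
    fun i => by rw [hdot]
  have hdw : ∀ (i : Fin 4) (b : Fin 2), dot i * w (i+1) b = 0 := by
    intro i b
    set a : Fin 2 := if e i then 0 else 1 with ha
    have h1 : uval (e i) (α i) a = 1 := by rw [ha]; exact uval_sel (e i) (α i)
    have h2 := hprod i a b
    rw [hw i a 0, hw i a 1, hw (i+1) 0 b, hw (i+1) 1 b] at h2
    rw [hdotA]
    linear_combination h2 - (w i 0 * uval (e (i+1)) (α (i+1)) 0 * w (i+1) b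
      + w i 1 * uval (e (i+1)) (α (i+1)) 1 * w (i+1) b) * h1
  set m : Fin 4 → Mode := fun i =>
    if w i = 0 then Mode.Z else if dot i = 0 then Mode.L else Mode.F with hm
  have hmA : ∀ i, m i = if w i = 0 then Mode.Z else if dot i = 0 then Mode.L else Mode.F :=
    fun i => by rw [hm]
  have hmZ : ∀ i, m i = Mode.Z ↔ w i = 0 := by
    intro i
    rw [hmA]
    split_ifs with h1 h2
    · simp [h1]
    · exact ⟨(fun h => by cases h), fun h => absurd h h1⟩
    · exact ⟨(fun h => by cases h), fun h => absurd h h1⟩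
  have hmL : ∀ i, m i = Mode.L → dot i = 0 := by
    intro i
    rw [hmA]
    split_ifs with h1 h2
    · exact fun h => by cases h
    · exact fun _ => h2
    · exact fun h => by cases h
  have hmF : ∀ i, m i = Mode.F → w i ≠ 0 ∧ dot i ≠ 0 := by
    intro i
    rw [hmA]
    split_ifs with h1 h2
    · exact fun h => by cases h
    · exact fun h => by cases h
    · exact fun _ => ⟨h1, h2⟩
  set δ : Chart := ⟨m, e⟩ with hδ
  have hδm : ∀ i, δ.m i = m i := fun i => rfl
  have hδe : ∀ i, δ.e i = e i := fun i => rfl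
  have hvalid : δ.valid := by
    intro i hF
    rw [hδm] at hF ⊢
    obtain ⟨hwne, hdne⟩ := hmF i hF
    refine (hmZ (i+1)).mpr ?_
    funext b
    rcases mul_eq_zero.mp (hdw i b) with h | h
    · exact absurd h hdne
    · exact h
  have hperp : ∀ i : Fin 4, dot i = 0 →
      ∃ lam : ℂ, w i 0 = lam * (-(uval (e (i+1)) (α (i+1)) 1))
        ∧ w i 1 = lam * (uval (e (i+1)) (α (i+1)) 0) := by
    intro i hd
    refine perp (uval (e (i+1)) (α (i+1))) ?_ (w i) (by rw [← hdotA]; exact hd)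
    rcases he : e (i+1)
    · right; simp [uval, he, fin2_one_ne_zero]
    · left; simp [uval, he]
  set lam : Fin 4 → ℂ := fun i => if h : dot i = 0 then (hperp i h).choose else 0 with hlam
  have hlamA : ∀ i (h : dot i = 0), lam i = (hperp i h).choose := by
    intro i h
    rw [hlam]
    exact dif_pos h
  set sv : Fin 4 → ℂ := fun i =>
    if m i = Mode.L then lam i else if m i = Mode.F then w i 0
    else if m (i - 1) = Mode.F then w (i-1) 1 else 0 with hsv
  have hsvA : ∀ i, sv i = if m i = Mode.L then lam i else if m i = Mode.F then w i 0
      else if m (i - 1) = Mode.F then w (i-1) 1 else 0 := fun i => by rw [hsv]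
  set p : Fin 8 → ℂ := fun j =>
    if h4 : j.val < 4 then α ⟨j.val, h4⟩ else sv ⟨j.val - 4, by omega⟩ with hp
  have hAv : ∀ i : Fin 4, MvPolynomial.eval p (Av i) = α i := by
    intro i
    rw [Av, eval_X]
    simp only [hp, Fin.val_mk]
    rw [dif_pos i.isLt]
  have hSv : ∀ i : Fin 4, MvPolynomial.eval p (Sv i) = sv i := by
    intro i
    rw [Sv, eval_X]
    simp only [hp, Fin.val_mk]
    rw [dif_neg (by omega)]
    congr 1
    ext
    simp
  have huP : ∀ (i : Fin 4) (a : Fin 2), MvPolynomial.eval p (uP δ i a) = uval (e i) (α i) a := by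
    intro i a
    rw [uP, uval, hδe]
    rcases he : e i
    · simp only [Bool.false_eq_true, if_false]
      rcases eq_or_ne a 0 with h | h
      · rw [if_pos h, if_pos h, hAv]
      · rw [if_neg h, if_neg h, map_one]
    · simp only [if_true]
      rcases eq_or_ne a 0 with h | h
      · rw [if_pos h, if_pos h, map_one]
      · rw [if_neg h, if_neg h, hAv]
  have hvP : ∀ (i : Fin 4) (b : Fin 2), MvPolynomial.eval p (vP δ i b) = w i b := by
    intro i b
    rcases hmi : m i with _ | _ | _
    · -- L
      have hd : dot i = 0 := hmL i hmi
      have hsvi : sv i = lam i := by rw [hsvA, if_pos hmi]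
      obtain ⟨hl0, hl1⟩ := (hperp i hd).choose_spec
      rcases eq_or_ne b 0 with hb | hb
      · subst hb
        rw [vP_L0 (show δ.m i = Mode.L from hmi)]
        rw [map_mul]
        rw [hSv]
        rw [map_neg]
        rw [huP]
        rw [hsvi]
        rw [hlamA i hd]
        exact hl0.symm
      · have hb1 : b = 1 := by omega
        subst hb1
        rw [vP_L1 (show δ.m i = Mode.L from hmi)]
        rw [map_mul]
        rw [hSv]
        rw [huP]
        rw [hsvi]
        rw [hlamA i hd]
        exact hl1.symm
    · -- F
      have hsvi : sv i = w i 0 := by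
        rw [hsvA, if_neg (by rw [hmi]; exact fun h => by cases h), if_pos hmi]
      have hnext : m (i+1) = Mode.Z := hvalid i hmi
      have hsvi1 : sv (i+1) = w i 1 := by
        rw [hsvA, if_neg (by rw [hnext]; exact fun h => by cases h),
          if_neg (by rw [hnext]; exact fun h => by cases h),
          show i + 1 - 1 = i by omega, if_pos hmi]
      rcases eq_or_ne b 0 with hb | hb
      · rw [hb, vP_F0 (show δ.m i = Mode.F from hmi), hSv, hsvi]
      · have hb1 : b = 1 := by omega
        rw [hb1, vP_F1 (show δ.m i = Mode.F from hmi), hSv, hsvi1]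
    · -- Z
      have hwz : w i = 0 := (hmZ i).mp hmi
      rw [vP_Z (show δ.m i = Mode.Z from hmi), map_zero, hwz]
      rfl
  have hfact : ∀ idx : σt, MvPolynomial.eval p (φ δ (X idx)) = x idx := by
    rintro ⟨i, a, b⟩
    rw [φ_X, map_mul, huP, hvP, hw i a b]
  refine ⟨δ, hvalid, ?_⟩
  intro g hg
  have hhom : (MvPolynomial.eval x : MvPolynomial σt ℂ →+* ℂ)
      = (MvPolynomial.eval p).comp ((φ δ : MvPolynomial σt ℂ →ₐ[ℂ] P8) :
          MvPolynomial σt ℂ →+* P8) := by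
    apply MvPolynomial.ringHom_ext
    · intro r
      simp [φ]
    · intro idx
      simp only [RingHom.coe_comp, Function.comp_apply, AlgHom.coe_toRingHom, eval_X]
      exact (hfact idx).symm
  have : MvPolynomial.eval x g = MvPolynomial.eval p (φ δ g) := by
    rw [hhom]
    rfl
  rw [this, RingHom.mem_ker.mp hg, map_zero]

end KSaux


namespace KSaux

open MvPolynomial

instance : Fintype Chart :=
  Fintype.ofSurjective (fun p : (Fin 4 → Mode) × (Fin 4 → Bool) => Chart.mk p.1 p.2)
    (fun δ => ⟨(δ.m, δ.e), rfl⟩)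

lemma exists_ker_le {q : Ideal Rr} (hq : q.IsPrime) (hKS : KSideal ≤ q) :
    ∃ δ : Chart, δ.valid ∧ RingHom.ker (φ δ) ≤ q := by
  classical
  by_contra hcon
  push_neg at hcon
  have hchoose : ∀ δ : Chart, ∃ g : Rr,
      (δ.valid → (g ∈ RingHom.ker (φ δ) ∧ g ∉ q)) ∧ (¬ δ.valid → g = 1) := by
    intro δ
    by_cases hv : δ.valid
    · have h2 := hcon δ hv
      rw [SetLike.not_le_iff_exists] at h2
      obtain ⟨g, hg1, hg2⟩ := h2
      exact ⟨g, fun _ => ⟨hg1, hg2⟩, fun h => absurd hv h⟩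
    · exact ⟨1, fun h => absurd h hv, fun _ => rfl⟩
  choose g hgspec using hchoose
  set G : Rr := ∏ δ : Chart, g δ with hG
  have hGk : ∀ δ : Chart, δ.valid → G ∈ RingHom.ker (φ δ) := by
    intro δ hv
    rw [hG, ← Finset.mul_prod_erase Finset.univ g (Finset.mem_univ δ)]
    exact Ideal.mul_mem_right _ _ (((hgspec δ).1 hv).1)
  have hGq : G ∉ q := by
    rw [hG]
    refine Finset.prod_induction g (fun y => y ∉ q) ?_ ?_ ?_
    · intro a b ha hb hab
      rcases hq.mem_or_mem hab with h | h
      · exact ha h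
      · exact hb h
    · intro h1
      exact hq.ne_top ((Ideal.eq_top_iff_one _).mpr h1)
    · intro δ _
      by_cases hv : δ.valid
      · exact ((hgspec δ).1 hv).2
      · rw [(hgspec δ).2 hv]
        intro h1
        exact hq.ne_top ((Ideal.eq_top_iff_one _).mpr h1)
  have hGrad : G ∈ KSideal.radical := by
    rw [← MvPolynomial.vanishingIdeal_zeroLocus_eq_radical (K := ℂ)]
    rw [MvPolynomial.mem_vanishingIdeal_iff]
    intro x hx
    obtain ⟨δ, hv, hval⟩ := cover x hx
    simpa using hval G (hGk δ hv)
  obtain ⟨n, hn⟩ := Ideal.mem_radical_iff.mp hGrad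
  exact hGq (hq.mem_of_pow_mem n (hKS hn))

/-! ### Lower bound chain -/

def δ₀ : Chart := ⟨fun _ => Mode.L, fun _ => true⟩

lemma δ₀_valid : δ₀.valid := fun _ h => Mode.noConfusion h

noncomputable def kil (k : ℕ) : Fin 8 → P8 := fun j => if (j : ℕ) < 8 - k then 0 else X j

noncomputable def ψ (k : ℕ) : Rr →ₐ[ℂ] P8 := (aeval (kil k)).comp (φ δ₀)

lemma KS_le_ker_ψ (k : ℕ) : KSideal ≤ RingHom.ker (ψ k) := by
  intro g hg
  have h0 : φ δ₀ g = 0 := KS_le_ker δ₀ δ₀_valid hg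
  rw [RingHom.mem_ker]
  show aeval (kil k) (φ δ₀ g) = 0
  rw [h0, map_zero]

lemma ψ_comp (k : ℕ) (g : Rr) : aeval (kil k) (ψ (k+1) g) = ψ k g := by
  show ((aeval (kil k)).comp (ψ (k+1))) g = ((aeval (kil k)).comp (φ δ₀)) g
  congr 1
  rw [ψ, ← AlgHom.comp_assoc]
  congr 1
  apply MvPolynomial.algHom_ext
  intro j
  simp only [AlgHom.comp_apply, aeval_X]
  rw [kil]
  by_cases hj : (j : ℕ) < 8 - (k+1)
  · rw [if_pos hj, map_zero, kil, if_pos (by omega)]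
  · rw [if_neg hj, aeval_X]

lemma ker_ψ_mono (k : ℕ) : RingHom.ker (ψ (k+1)) ≤ RingHom.ker (ψ k) := by
  intro g hg
  rw [RingHom.mem_ker] at hg ⊢
  rw [← ψ_comp k g, hg, map_zero]

lemma uP_δ₀_0 (i : Fin 4) : uP δ₀ i 0 = 1 := by simp [uP, δ₀]

lemma uP_δ₀_1 (i : Fin 4) : uP δ₀ i 1 = Av i := by simp [uP, δ₀, fin2_one_ne_zero]

lemma φ₀_X01 (i : Fin 4) : φ δ₀ (X (i, 0, 1)) = Sv i := by
  rw [φ_X, uP_δ₀_0, vP_L1 (show δ₀.m i = Mode.L from rfl), uP_δ₀_0, one_mul, mul_one]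

lemma φ₀_X11 (i : Fin 4) : φ δ₀ (X (i, 1, 1)) = Av i * Sv i := by
  rw [φ_X, uP_δ₀_1, vP_L1 (show δ₀.m i = Mode.L from rfl), uP_δ₀_0, mul_one]

lemma aeval_kil_Av (k : ℕ) (i : Fin 4) :
    aeval (kil k) (Av i) = if (i : ℕ) < 8 - k then 0 else Av i := by
  rw [Av, aeval_X, kil]

lemma aeval_kil_Sv (k : ℕ) (i : Fin 4) :
    aeval (kil k) (Sv i) = if 4 + (i : ℕ) < 8 - k then 0 else Sv i := by
  rw [Sv, aeval_X, kil]

lemma separator (k : ℕ) (hk : k < 8) :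
    ∃ ep : Rr, ψ k ep = 0 ∧ ψ (k+1) ep ≠ 0 := by
  by_cases hk3 : k ≤ 3
  · refine ⟨X (⟨3 - k, by omega⟩, 0, 1), ?_, ?_⟩
    · show aeval (kil k) (φ δ₀ (X (⟨3 - k, by omega⟩, 0, 1))) = 0
      rw [φ₀_X01, aeval_kil_Sv, if_pos (by simp only [Fin.val_mk]; omega)]
    · show aeval (kil (k+1)) (φ δ₀ (X (⟨3 - k, by omega⟩, 0, 1))) ≠ 0
      rw [φ₀_X01, aeval_kil_Sv, if_neg (by simp only [Fin.val_mk]; omega)]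
      exact X_ne_zero _
  · refine ⟨X (⟨7 - k, by omega⟩, 1, 1), ?_, ?_⟩
    · show aeval (kil k) (φ δ₀ (X (⟨7 - k, by omega⟩, 1, 1))) = 0
      rw [φ₀_X11, map_mul, aeval_kil_Av, if_pos (by simp only [Fin.val_mk]; omega), zero_mul]
    · show aeval (kil (k+1)) (φ δ₀ (X (⟨7 - k, by omega⟩, 1, 1))) ≠ 0
      rw [φ₀_X11, map_mul, aeval_kil_Av, if_neg (by simp only [Fin.val_mk]; omega),
        aeval_kil_Sv, if_neg (by simp only [Fin.val_mk]; omega)]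
      exact mul_ne_zero (X_ne_zero _) (X_ne_zero _)

lemma ker_ψ_lt (k : ℕ) (hk : k < 8) :
    RingHom.ker (ψ (k+1)) < RingHom.ker (ψ k) := by
  obtain ⟨ep, h1, h2⟩ := separator k hk
  refine lt_of_le_of_ne (ker_ψ_mono k) ?_
  intro heq
  have : ep ∈ RingHom.ker (ψ (k+1)) := by
    rw [heq, RingHom.mem_ker]; exact h1
  exact h2 (RingHom.mem_ker.mp this)

end KSaux


open MvPolynomial Polynomial

namespace KSaux

section Peel

variable {K : Type*} [Field K] {A : Type*} [CommRing A] [Algebra K A]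

lemma unit_not_mem {q : Ideal A} (hq : q.IsPrime) {c : K} (hc : c ≠ 0)
    (hmem : algebraMap K A c ∈ q) : False := by
  have hu : IsUnit (algebraMap K A c) := by
    refine IsUnit.of_mul_eq_one (algebraMap K A c⁻¹) ?_
    rw [← map_mul, mul_inv_cancel₀ hc, map_one]
  exact hq.ne_top (Ideal.eq_top_of_isUnit_mem _ hmem hu)

lemma eval₂_split {S : Type*} [CommRing S] (φ : S →+* A) (x : A) (p : Polynomial S) :
    Polynomial.eval₂ φ x p = x * Polynomial.eval₂ φ x p.divX + φ (p.coeff 0) := by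
  conv_lhs => rw [← Polynomial.X_mul_divX_add p]
  rw [Polynomial.eval₂_add, Polynomial.eval₂_mul, Polynomial.eval₂_X, Polynomial.eval₂_C]

/-- evaluation of `finSuccEquiv` output -/
lemma eval₂_finSuccEquiv {n : ℕ} (f : Fin (n+1) → A) (Q : MvPolynomial (Fin (n+1)) K) :
    Polynomial.eval₂ ((aeval (fun i => f i.succ) : MvPolynomial (Fin n) K →ₐ[K] A) :
        MvPolynomial (Fin n) K →+* A) (f 0) (finSuccEquiv K n Q) = aeval f Q := by
  have h : (Polynomial.eval₂RingHom ((aeval (fun i => f i.succ) :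
      MvPolynomial (Fin n) K →ₐ[K] A) : MvPolynomial (Fin n) K →+* A) (f 0)).comp
        ((finSuccEquiv K n : MvPolynomial (Fin (n+1)) K ≃+* Polynomial (MvPolynomial (Fin n) K)) :
          MvPolynomial (Fin (n+1)) K →+* Polynomial (MvPolynomial (Fin n) K))
      = ((aeval f : MvPolynomial (Fin (n+1)) K →ₐ[K] A) : MvPolynomial (Fin (n+1)) K →+* A) := by
    apply MvPolynomial.ringHom_ext
    · intro r
      simp [finSuccEquiv_apply]
    · intro i
      refine Fin.cases ?_ ?_ i
      · simp [finSuccEquiv_X_zero]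
      · intro j
        simp [finSuccEquiv_X_succ]
  have := congrArg (fun g => g Q) h
  simpa using this

theorem peel : ∀ (n : ℕ) (Q : MvPolynomial (Fin n) K), Q ≠ 0 →
    ∀ (q : Fin (n+1) → Ideal A), (∀ i, (q i).IsPrime) → Monotone q →
    ∀ f : Fin n → A, (∀ i : Fin n, f i ∈ q i.succ) → (∀ i : Fin n, f i ∉ q i.castSucc) →
    aeval f Q ∈ q 0 → False := by
  intro n
  induction n with
  | zero =>
    intro Q hQ q hq _ f _ _ hmem
    obtain ⟨c, rfl⟩ := C_surjective (Fin 0) Q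
    have hc : c ≠ 0 := fun h => hQ (by rw [h, map_zero])
    rw [MvPolynomial.aeval_C] at hmem
    exact unit_not_mem (hq 0) hc hmem
  | succ n ih =>
    intro Q hQ q hq hmono f hf₁ hf₂ hmem
    have hf00 : f 0 ∉ q 0 := by
      have := hf₂ 0
      rwa [Fin.castSucc_zero] at this
    have hf01 : f 0 ∈ q 1 := by
      have := hf₁ 0
      rwa [Fin.succ_zero_eq_one] at this
    set g : Fin n → A := fun i => f i.succ with hg
    set ψ : MvPolynomial (Fin n) K →+* A :=
      ((aeval g : MvPolynomial (Fin n) K →ₐ[K] A) : MvPolynomial (Fin n) K →+* A) with hψ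
    have hEQ : Polynomial.eval₂ ψ (f 0) (finSuccEquiv K n Q) ∈ q 0 := by
      rw [hψ, hg, eval₂_finSuccEquiv]; exact hmem
    have hpne : finSuccEquiv K n Q ≠ 0 := by
      intro h
      exact hQ ((map_eq_zero_iff _ (AlgEquiv.injective _)).mp h)
    have step : ∀ p : Polynomial (MvPolynomial (Fin n) K), p.coeff 0 ≠ 0 →
        Polynomial.eval₂ ψ (f 0) p ∈ q 0 → False := by
      intro p hc hpm
      have h1 : aeval g (p.coeff 0) ∈ q 1 := by
        have h0 : Polynomial.eval₂ ψ (f 0) p ∈ q 1 := hmono (by norm_num) hpm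
        have heq : aeval g (p.coeff 0) = Polynomial.eval₂ ψ (f 0) p
            - f 0 * Polynomial.eval₂ ψ (f 0) p.divX := by
          rw [eval₂_split ψ (f 0) p]; simp [hψ]
        rw [heq]
        exact Ideal.sub_mem _ h0 (Ideal.mul_mem_right _ _ hf01)
      refine ih (p.coeff 0) hc (fun i => q i.succ) (fun i => hq i.succ)
        (fun i j hij => hmono (Fin.succ_le_succ_iff.mpr hij)) g
        (fun i => hf₁ i.succ) (fun i => ?_) ?_
      · have := hf₂ i.succ
        rwa [← Fin.succ_castSucc] at this
      · show aeval g (p.coeff 0) ∈ q (Fin.succ 0)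
        rwa [Fin.succ_zero_eq_one]
    have key : ∀ (N : ℕ) (p : Polynomial (MvPolynomial (Fin n) K)), p ≠ 0 →
        p.natDegree ≤ N → Polynomial.eval₂ ψ (f 0) p ∈ q 0 → False := by
      intro N
      induction N with
      | zero =>
        intro p hp hdeg hpm
        rcases eq_or_ne (p.coeff 0) 0 with hc | hc
        · exact hp (by rw [Polynomial.eq_C_of_natDegree_eq_zero (Nat.le_zero.mp hdeg), hc, map_zero])
        · exact step p hc hpm
      | succ N ihN =>
        intro p hp hdeg hpm
        rcases eq_or_ne (p.coeff 0) 0 with hc | hc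
        · have hsplit : Polynomial.eval₂ ψ (f 0) p
              = f 0 * Polynomial.eval₂ ψ (f 0) p.divX := by
            rw [eval₂_split ψ (f 0) p, hc, map_zero, add_zero]
          have hdvx : Polynomial.eval₂ ψ (f 0) p.divX ∈ q 0 := by
            rw [hsplit] at hpm
            rcases (hq 0).mem_or_mem hpm with h | h
            · exact absurd h hf00
            · exact h
          have hdne : p.divX ≠ 0 := by
            intro h
            apply hp
            rw [← Polynomial.X_mul_divX_add p, h, hc, map_zero, mul_zero, add_zero]
          refine ihN p.divX hdne ?_ hdvx
          have := Polynomial.natDegree_divX_eq_natDegree_tsub_one (p := p)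
          omega
        · exact step p hc hpm
    exact key _ _ hpne le_rfl hEQ

end Peel

end KSaux


open MvPolynomial

namespace KSaux

section Dependence

variable {K : Type*} [Field K]

/-- Any `n+1` polynomials in `n` variables are algebraically dependent. -/
theorem exists_dependence (n : ℕ) (y : Fin (n+1) → MvPolynomial (Fin n) K) :
    ∃ Q : MvPolynomial (Fin (n+1)) K, Q ≠ 0 ∧ aeval y Q = 0 := by
  classical
  set d : ℕ := (Finset.univ.sup fun i => (y i).totalDegree) + 1 with hd
  have hdy : ∀ i, (y i).totalDegree ≤ d := by
    intro i
    have h : (y i).totalDegree ≤ Finset.univ.sup fun i => (y i).totalDegree := by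
      simpa using Finset.le_sup (f := fun i => (y i).totalDegree) (Finset.mem_univ i)
    omega
  set N : ℕ := ((n+1)*d+1)^n with hN
  have hN1 : 1 ≤ N := Nat.one_le_pow _ _ (by positivity)
  set D : ℕ := (n+1)*N*d with hD
  -- the family of monomials in the y's
  set F : (Fin (n+1) → Fin (N+1)) → MvPolynomial (Fin n) K :=
    fun α => ∏ i, y i ^ (α i : ℕ) with hF
  have hFdeg : ∀ α, (F α).totalDegree ≤ D := by
    intro α
    refine le_trans (totalDegree_finset_prod _ _) ?_
    refine le_trans (Finset.sum_le_sum (fun i _ => totalDegree_pow (y i) (α i : ℕ))) ?_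
    refine le_trans (Finset.sum_le_sum (fun i _ =>
      Nat.mul_le_mul (Nat.le_of_lt_succ (α i).isLt) (hdy i))) ?_
    rw [Finset.sum_const, Finset.card_univ, Fintype.card_fin, smul_eq_mul, hD]
    ring_nf; exact le_rfl
  -- monomial basis set
  set T : Finset (MvPolynomial (Fin n) K) :=
    Finset.image (fun g : Fin n → Fin (D+1) =>
      monomial (Finsupp.equivFunOnFinite.symm fun j => (g j : ℕ)) (1:K)) Finset.univ with hT
  have hTcard : T.card ≤ (D+1)^n := by
    refine le_trans (Finset.card_image_le) ?_
    rw [Finset.card_univ, Fintype.card_fun, Fintype.card_fin, Fintype.card_fin]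
  have hspan : ∀ p : MvPolynomial (Fin n) K, p.totalDegree ≤ D →
      p ∈ Submodule.span K (T : Set (MvPolynomial (Fin n) K)) := by
    intro p hp
    rw [← support_sum_monomial_coeff p]
    refine Submodule.sum_mem _ (fun m hm => ?_)
    have hmono : monomial m (coeff m p) = (coeff m p) • monomial m (1:K) := by
      rw [MvPolynomial.smul_monomial, smul_eq_mul, mul_one]
    rw [hmono]
    refine Submodule.smul_mem _ _ (Submodule.subset_span ?_)
    rw [hT]
    simp only [Finset.coe_image, Set.mem_image, Finset.coe_univ, Set.mem_univ, true_and]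
    have hmj : ∀ j, m j ≤ D := by
      intro j
      refine le_trans ?_ (le_trans (le_totalDegree hm) hp)
      rcases eq_or_ne (m j) 0 with h | h
      · omega
      · exact Finset.single_le_sum (f := fun a => m a) (fun _ _ => Nat.zero_le _)
          (Finsupp.mem_support_iff.mpr h)
    refine ⟨fun j => ⟨m j, Nat.lt_succ_of_le (hmj j)⟩, ?_⟩
    congr 1
    ext j
    simp
  -- not linearly independent by cardinality
  have hcard : ¬ LinearIndependent K F := by
    intro hli
    set W := Submodule.span K (T : Set (MvPolynomial (Fin n) K)) with hW
    have hmem : ∀ α, F α ∈ W := fun α => hspan _ (hFdeg α)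
    set F' : (Fin (n+1) → Fin (N+1)) → W := fun α => ⟨F α, hmem α⟩ with hF'
    have hli' : LinearIndependent K F' := by
      refine LinearIndependent.of_comp W.subtype ?_
      convert hli
      rfl
    have hfin : Fintype.card (Fin (n+1) → Fin (N+1)) ≤ Module.finrank K W :=
      hli'.fintype_card_le_finrank
    have hrank : Module.finrank K W ≤ T.card := finrank_span_finset_le_card T
    rw [Fintype.card_fun, Fintype.card_fin, Fintype.card_fin] at hfin
    have hlt : (D+1)^n < (N+1)^(n+1) := by
      have h1 : D + 1 < ((n+1)*d+1) * (N+1) := by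
        have : ((n+1)*d+1) * (N+1) = (n+1)*d*N + (n+1)*d + N + 1 := by ring
        rw [this, hD]
        have : 0 < (n+1)*d := by positivity
        nlinarith
      calc (D+1)^n ≤ (((n+1)*d+1) * (N+1))^n := Nat.pow_le_pow_left h1.le n
        _ = N * (N+1)^n := by rw [mul_pow, ← hN]
        _ < (N+1)^(n+1) := by
            rw [pow_succ]
            calc N * (N+1)^n = (N+1)^n * N := by ring
              _ < (N+1)^n * (N+1) := by
                  have hpos : 0 < (N+1)^n := by positivity
                  exact (mul_lt_mul_iff_right₀ hpos).mpr (Nat.lt_succ_self N)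
    omega
  rw [Fintype.not_linearIndependent_iff] at hcard
  obtain ⟨c, hsum, α₀, hα₀⟩ := hcard
  set expo : (Fin (n+1) → Fin (N+1)) → (Fin (n+1) →₀ ℕ) :=
    fun α => Finsupp.equivFunOnFinite.symm (fun i => (α i : ℕ)) with hexpo
  have hexpo_inj : Function.Injective expo := by
    intro α β h
    funext i
    have := congrArg (fun f => f i) h
    simpa [hexpo, Fin.val_injective.eq_iff] using this
  refine ⟨∑ α : (Fin (n+1) → Fin (N+1)), monomial (expo α) (c α), ?_, ?_⟩
  · intro h0
    have hc : coeff (expo α₀) (∑ α : (Fin (n+1) → Fin (N+1)), monomial (expo α) (c α)) = c α₀ := by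
      rw [MvPolynomial.coeff_sum]
      rw [Finset.sum_eq_single α₀]
      · simp [MvPolynomial.coeff_monomial]
      · intro β _ hβ
        rw [MvPolynomial.coeff_monomial, if_neg (fun h => hβ (hexpo_inj h))]
      · intro h; exact absurd (Finset.mem_univ _) h
    rw [h0] at hc
    simp at hc
    exact hα₀ hc.symm
  · rw [map_sum]
    have : ∀ α, aeval y (monomial (expo α) (c α)) = c α • F α := by
      intro α
      rw [MvPolynomial.aeval_monomial, Algebra.smul_def]
      congr 1
      rw [Finsupp.prod_pow]
      refine Finset.prod_congr rfl (fun i _ => ?_)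
      simp [hexpo]
    rw [Finset.sum_congr rfl (fun α _ => this α)]
    exact hsum

end Dependence

end KSaux


namespace KSaux

open MvPolynomial

lemma map_mk_lt {I J : Ideal Rr} (hKSI : KSideal ≤ I) (hKSJ : KSideal ≤ J) (hIJ : I < J) :
    I.map (Ideal.Quotient.mk KSideal) < J.map (Ideal.Quotient.mk KSideal) := by
  refine lt_of_le_of_ne (Ideal.map_mono hIJ.le) ?_
  intro heq
  have hcomap : ∀ (I' : Ideal Rr), KSideal ≤ I' →
      (I'.map (Ideal.Quotient.mk KSideal)).comap (Ideal.Quotient.mk KSideal) = I' := by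
    intro I' hI'
    rw [Ideal.comap_map_of_surjective _ Ideal.Quotient.mk_surjective]
    refine sup_eq_left.mpr ?_
    intro a ha
    have : (Ideal.Quotient.mk KSideal) a = 0 := ha
    exact hI' (Ideal.Quotient.eq_zero_iff_mem.mp this)
  have : I = J := by
    rw [← hcomap I hKSI, ← hcomap J hKSJ, heq]
  exact hIJ.ne this

noncomputable def lowP (j : Fin 9) : PrimeSpectrum (Rr ⧸ KSideal) :=
  ⟨(RingHom.ker (ψ (8 - j.val))).map (Ideal.Quotient.mk KSideal), by
    haveI : (RingHom.ker (ψ (8 - j.val))).IsPrime := RingHom.ker_isPrime _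
    refine Ideal.map_isPrime_of_surjective Ideal.Quotient.mk_surjective ?_
    rw [Ideal.mk_ker]
    exact KS_le_ker_ψ _⟩

lemma lowP_strict : ∀ j : Fin 8, lowP j.castSucc < lowP j.succ := by
  intro j
  rw [← PrimeSpectrum.asIdeal_lt_asIdeal]
  show (RingHom.ker (ψ (8 - j.castSucc.val))).map _ < (RingHom.ker (ψ (8 - j.succ.val))).map _
  have h1 : 8 - j.castSucc.val = (8 - j.succ.val) + 1 := by
    have := j.isLt
    simp only [Fin.coe_castSucc, Fin.val_succ]
    omega
  rw [h1]
  exact map_mk_lt (KS_le_ker_ψ _) (KS_le_ker_ψ _)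
    (ker_ψ_lt (8 - j.succ.val) (by omega))

noncomputable def lowSeries : LTSeries (PrimeSpectrum (Rr ⧸ KSideal)) :=
  ⟨8, lowP, lowP_strict⟩

lemma lower_bound : (8 : WithBot (WithTop ℕ)) ≤ ringKrullDim (Rr ⧸ KSideal) := by
  have := Order.LTSeries.length_le_krullDim lowSeries
  exact_mod_cast this

lemma upper_bound_series (l : LTSeries (PrimeSpectrum (Rr ⧸ KSideal))) : l.length ≤ 8 := by
  by_contra hlen
  push_neg at hlen
  -- 9 ≤ l.length
  have hlen9 : 9 ≤ l.length := hlen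
  set mk : Rr →+* (Rr ⧸ KSideal) := Ideal.Quotient.mk KSideal with hmk
  set q : Fin 10 → Ideal Rr :=
    fun i => (l.toFun ⟨i.val, by omega⟩).asIdeal.comap mk with hq
  have hqA : ∀ i : Fin 10, q i = (l.toFun ⟨i.val, by omega⟩).asIdeal.comap mk :=
    fun i => by rw [hq]
  have hqprime : ∀ i, (q i).IsPrime := by
    intro i
    rw [hqA]
    exact Ideal.IsPrime.comap _
  have hqmono : Monotone q := by
    intro i j hij
    rw [hqA, hqA]
    refine Ideal.comap_mono (l.monotone ?_)
    exact Fin.mk_le_mk.mpr hij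
  have hqstrict : ∀ i : Fin 9, q i.castSucc < q i.succ := by
    intro i
    rw [hqA, hqA]
    have hlt : l.toFun ⟨i.castSucc.val, by omega⟩ < l.toFun ⟨i.succ.val, by omega⟩ := by
      refine l.strictMono ?_
      rw [Fin.mk_lt_mk]
      simp only [Fin.coe_castSucc, Fin.val_succ]
      omega
    refine lt_of_le_of_ne (Ideal.comap_mono hlt.le) ?_
    intro heq
    have hmc : ∀ (P : PrimeSpectrum (Rr ⧸ KSideal)),
        (P.asIdeal.comap mk).map mk = P.asIdeal := fun P =>
      Ideal.map_comap_of_surjective mk Ideal.Quotient.mk_surjective _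
    have : l.toFun ⟨i.castSucc.val, by omega⟩ = l.toFun ⟨i.succ.val, by omega⟩ := by
      apply PrimeSpectrum.ext
      rw [← hmc (l.toFun ⟨i.castSucc.val, by omega⟩), ← hmc (l.toFun ⟨i.succ.val, by omega⟩), heq]
    exact hlt.ne this
  have hKS0 : KSideal ≤ q 0 := by
    rw [hqA]
    intro a ha
    rw [Ideal.mem_comap]
    have h0 : mk a = 0 := Ideal.Quotient.eq_zero_iff_mem.mpr ha
    rw [h0]
    exact Submodule.zero_mem _
  obtain ⟨δ, hδv, hδker⟩ := exists_ker_le (hqprime 0) hKS0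
  have hsep : ∀ i : Fin 9, ∃ a : Rr, a ∈ q i.succ ∧ a ∉ q i.castSucc := by
    intro i
    exact SetLike.exists_of_lt (hqstrict i)
  choose f hf1 hf2 using hsep
  obtain ⟨Q, hQne, hQval⟩ := exists_dependence 8 (fun i => φ δ (f i))
  have hmem : aeval f Q ∈ q 0 := by
    refine hδker ?_
    rw [RingHom.mem_ker]
    rw [MvPolynomial.comp_aeval_apply]
    exact hQval
  exact peel 9 Q hQne q hqprime hqmono f hf1 hf2 hmem

lemma upper_bound : ringKrullDim (Rr ⧸ KSideal) ≤ (8 : WithBot (WithTop ℕ)) := by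
  show (⨆ (p : LTSeries (PrimeSpectrum (Rr ⧸ KSideal))), (p.length : WithBot (WithTop ℕ))) ≤ _
  refine iSup_le ?_
  intro p
  have := upper_bound_series p
  exact_mod_cast this

end KSaux




/-- The Kashiwara–Saito singularity has dimension 8: the Krull dimension of its coordinate
ring (equivalently, of the zero set in `ℂ¹⁶`) is 8. -/
theorem stmt_17 :
    ringKrullDim (MvPolynomial (Fin 4 × Fin 2 × Fin 2) ℂ ⧸ KSideal) = 8 := by
  exact le_antisymm KSaux.upper_bound KSaux.lower_bound
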